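/- arXiv:2206.13743 — 3 statements merged into one kernel-verified Lean document; each statement's English description precedes it below -/
import Mathlib

section
/- For any Hermitian matrix Π that is not diagonal in the computational basis, there exists a unit vector |ψ⟩ = Σ_y c_y |y⟩ with |c_y|² = 1/2^n for all y such that tr[((1/2^n)I − |ψ⟩⟨ψ|)Π] ≠ 0. (Completeness of ψ-induced quantum noise witnesses.) -/
open ComplexOrder Matrix
open Complex (I)

/-- Completeness of ψ-induced quantum noise witnesses: for any Hermitian matrix `Pm`
that is not diagonal in the computational basis, there exists a unit vector
`|ψ⟩ = Σ_y c_y |y⟩` with `|c_y|² = 1/2^n` for all `y` such that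
`tr[((1/2^n)·I − |ψ⟩⟨ψ|) Pm] ≠ 0`. -/
theorem witness_completeness {n : ℕ} (Pm : Matrix (Fin n → Bool) (Fin n → Bool) ℂ)
    (hH : Pm.IsHermitian) (hq : ∃ y z, y ≠ z ∧ Pm y z ≠ 0) :
    ∃ c : (Fin n → Bool) → ℂ,
      (∀ y, Complex.normSq (c y) = 1 / 2 ^ n) ∧
      ((((1 : ℂ) / 2 ^ n) • (1 : Matrix (Fin n → Bool) (Fin n → Bool) ℂ)
          - Matrix.vecMulVec c (star c)) * Pm).trace ≠ 0 := by
  by_contra hcon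
  push_neg at hcon
  obtain ⟨y₀, z₀, hne, hP⟩ := hq
  set r : ℝ := (Real.sqrt (2 ^ n))⁻¹ with hrdef
  have hrpos : 0 < r := inv_pos.mpr (Real.sqrt_pos.mpr (by positivity))
  have hrr : r * r = 1 / 2 ^ n := by
    rw [hrdef, ← mul_inv, Real.mul_self_sqrt (by positivity)]
    norm_num
  have hrne : ((r : ℂ)) ≠ 0 := by
    exact_mod_cast Complex.ofReal_ne_zero.mpr hrpos.ne'
  set u : ℂ → ℂ → (Fin n → Bool) → ℂ :=
    fun α β y => (r : ℂ) * (if y = y₀ then α else if y = z₀ then β else 1) with hudef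
  have hnorm : ∀ α β : ℂ, Complex.normSq α = 1 → Complex.normSq β = 1 →
      ∀ y, Complex.normSq (u α β y) = 1 / 2 ^ n := by
    intro α β hα hβ y
    simp only [hudef, Complex.normSq_mul, Complex.normSq_ofReal]
    by_cases hy : y = y₀
    · simp [hy, hα, hrr, Ne.symm hne]
    · by_cases hy' : y = z₀
      · simp [hy, hy', hβ, hrr, Ne.symm hne]
      · simp [hy, hy', hrr]
  have hexp : ∀ v : (Fin n → Bool) → ℂ,
      ((((1 : ℂ) / 2 ^ n) • (1 : Matrix (Fin n → Bool) (Fin n → Bool) ℂ)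
          - Matrix.vecMulVec v (star v)) * Pm).trace
        = (1 / 2 ^ n) * Pm.trace - ∑ y, ∑ z, v y * star (v z) * Pm z y := by
    intro v
    rw [Matrix.sub_mul, Matrix.trace_sub, Matrix.smul_mul, Matrix.one_mul,
      Matrix.trace_smul, smul_eq_mul]
    congr 1
  have hS : ∀ α β : ℂ, Complex.normSq α = 1 → Complex.normSq β = 1 →
      (∑ y, ∑ z, u α β y * star (u α β z) * Pm z y) = (1 / 2 ^ n) * Pm.trace := by
    intro α β hα hβ
    have h0 := hcon (u α β) (hnorm α β hα hβ)
    rw [hexp (u α β)] at h0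
    linear_combination -h0
  have e1 := hS 1 1 (by simp) (by simp)
  have e2 := hS 1 (-1) (by simp) (by simp)
  have e3 := hS (-1) 1 (by simp) (by simp)
  have e4 := hS (-1) (-1) (by simp) (by simp)
  have e5 := hS 1 I (by simp) (by simp)
  have e6 := hS 1 (-I) (by simp) (by simp)
  have e7 := hS (-1) I (by simp) (by simp)
  have e8 := hS (-1) (-I) (by simp) (by simp)
  have hLpt : ∀ y z, u 1 1 y * star (u 1 1 z) * Pm z y
        - u 1 (-1) y * star (u 1 (-1) z) * Pm z y
        - u (-1) 1 y * star (u (-1) 1 z) * Pm z y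
        + u (-1) (-1) y * star (u (-1) (-1) z) * Pm z y
      = (if y = y₀ then if z = z₀ then (4 * (r:ℂ)^2) * Pm z y else 0 else 0)
        + (if y = z₀ then if z = y₀ then (4 * (r:ℂ)^2) * Pm z y else 0 else 0) := by
    intro y z
    simp only [hudef]
    by_cases hy : y = y₀ <;> by_cases hy' : y = z₀ <;>
      by_cases hz : z = y₀ <;> by_cases hz' : z = z₀
    all_goals try exact absurd (hy.symm.trans hy') hne
    all_goals try exact absurd (hz.symm.trans hz') hne
    all_goals
      simp only [hy, hy', hz, hz', if_true, if_false, eq_self_iff_true, if_pos, if_neg,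
        Ne.symm hne, hne, ite_true, ite_false]
    all_goals
      simp [hne, Ne.symm hne, star_mul', Complex.star_def, Complex.conj_ofReal,
        Complex.conj_I]
    all_goals ring
  have hMpt : ∀ y z, u 1 I y * star (u 1 I z) * Pm z y
        - u 1 (-I) y * star (u 1 (-I) z) * Pm z y
        - u (-1) I y * star (u (-1) I z) * Pm z y
        + u (-1) (-I) y * star (u (-1) (-I) z) * Pm z y
      = (if y = y₀ then if z = z₀ then (-(4 * I) * (r:ℂ)^2) * Pm z y else 0 else 0)
        + (if y = z₀ then if z = y₀ then ((4 * I) * (r:ℂ)^2) * Pm z y else 0 else 0) := by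
    intro y z
    simp only [hudef]
    by_cases hy : y = y₀ <;> by_cases hy' : y = z₀ <;>
      by_cases hz : z = y₀ <;> by_cases hz' : z = z₀
    all_goals try exact absurd (hy.symm.trans hy') hne
    all_goals try exact absurd (hz.symm.trans hz') hne
    all_goals
      simp only [hy, hy', hz, hz', if_true, if_false, eq_self_iff_true, if_pos, if_neg,
        Ne.symm hne, hne, ite_true, ite_false]
    all_goals
      simp [hne, Ne.symm hne, star_mul', Complex.star_def, Complex.conj_ofReal,
        Complex.conj_I]
    all_goals ring
  have hL : (4 * (r:ℂ)^2) * Pm z₀ y₀ + (4 * (r:ℂ)^2) * Pm y₀ z₀ = 0 := by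
    have h1 : ∑ y, ∑ z, (u 1 1 y * star (u 1 1 z) * Pm z y
        - u 1 (-1) y * star (u 1 (-1) z) * Pm z y
        - u (-1) 1 y * star (u (-1) 1 z) * Pm z y
        + u (-1) (-1) y * star (u (-1) (-1) z) * Pm z y) = 0 := by
      simp only [Finset.sum_sub_distrib, Finset.sum_add_distrib]
      rw [e1, e2, e3, e4]; ring
    simp only [hLpt] at h1
    simpa [Finset.sum_add_distrib] using h1
  have hM : (-(4 * I) * (r:ℂ)^2) * Pm z₀ y₀ + ((4 * I) * (r:ℂ)^2) * Pm y₀ z₀ = 0 := by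
    have h1 : ∑ y, ∑ z, (u 1 I y * star (u 1 I z) * Pm z y
        - u 1 (-I) y * star (u 1 (-I) z) * Pm z y
        - u (-1) I y * star (u (-1) I z) * Pm z y
        + u (-1) (-I) y * star (u (-1) (-I) z) * Pm z y) = 0 := by
      simp only [Finset.sum_sub_distrib, Finset.sum_add_distrib]
      rw [e5, e6, e7, e8]; ring
    simp only [hMpt] at h1
    simpa [Finset.sum_add_distrib] using h1
  have hfac : (4 * (r:ℂ)^2) ≠ 0 := by
    exact mul_ne_zero (by norm_num) (pow_ne_zero _ hrne)
  have hfacI : ((4 * I) * (r:ℂ)^2) ≠ 0 := by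
    exact mul_ne_zero (mul_ne_zero (by norm_num) Complex.I_ne_zero) (pow_ne_zero _ hrne)
  have k1 : Pm z₀ y₀ + Pm y₀ z₀ = 0 := by
    have h1' : (4 * (r:ℂ)^2) * (Pm z₀ y₀ + Pm y₀ z₀) = 0 := by linear_combination hL
    exact (mul_eq_zero.mp h1').resolve_left hfac
  have k2 : Pm y₀ z₀ - Pm z₀ y₀ = 0 := by
    have h1' : ((4 * I) * (r:ℂ)^2) * (Pm y₀ z₀ - Pm z₀ y₀) = 0 := by linear_combination hM
    exact (mul_eq_zero.mp h1').resolve_left hfacI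
  exact hP (by linear_combination (1/2 : ℂ) * k1 + (1/2 : ℂ) * k2)
end

section
/- (XY twirling) Let M be a measurement channel on n qubits. The map M^{XY}(ρ) := (1/2^n) Σ_{P∈{X,Y}^⊗n} P·M(PρP)·P is a measurement channel whose POVM elements have zero off-diagonal entries in the computational basis, i.e., M^{XY} is a classical measurement channel. -/
open ComplexOrder Matrix Finset

/-- Single-qubit Pauli matrix `i^{ax·az} X^{ax} Z^{az}`:
`(false,false) = I`, `(true,false) = X`, `(false,true) = Z`, `(true,true) = Y`. -/
noncomputable def pauli1 (ax az : Bool) : Matrix Bool Bool ℂ := fun x y =>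
  match ax, az with
  | false, false => if x = y then 1 else 0
  | true,  false => if x = y then 0 else 1
  | false, true  => if x = y then (if x then -1 else 1) else 0
  | true,  true  => if x = false ∧ y = true then -Complex.I
                    else if x = true ∧ y = false then Complex.I else 0

/-- The `n`-qubit Pauli word with X-part `a` and Z-part `b`. -/
noncomputable def pauliW {n : ℕ} (a b : Fin n → Bool) :
    Matrix (Fin n → Bool) (Fin n → Bool) ℂ :=
  fun x y => ∏ i, pauli1 (a i) (b i) (x i) (y i)

/-- The measurement channel of a POVM `{Pm x}`. -/
noncomputable def mchan {n : ℕ}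
    (Pm : (Fin n → Bool) → Matrix (Fin n → Bool) (Fin n → Bool) ℂ)
    (ρ : Matrix (Fin n → Bool) (Fin n → Bool) ℂ) :
    Matrix (Fin n → Bool) (Fin n → Bool) ℂ :=
  ∑ x, (Pm x * ρ).trace • Matrix.single x x (1 : ℂ)

/-! ### Auxiliary machinery for the XY twirling proof -/

/-- Single-qubit phase of `X` (`b = false`) or `Y` (`b = true`) on the bit-flip. -/
noncomputable def cph (b x : Bool) : ℂ :=
  if b then (if x then Complex.I else -Complex.I) else 1

lemma pauli1_true (b x y : Bool) :
    pauli1 true b x y = if y = !x then cph b x else 0 := by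
  cases b <;> cases x <;> cases y <;> simp [pauli1, cph]

lemma cph_mul_not (b x : Bool) : cph b x * cph b (!x) = 1 := by
  cases b <;> cases x <;> simp [cph, Complex.I_mul_I]

lemma star_cph (b x : Bool) : star (cph b (!x)) = cph b x := by
  cases b <;> cases x <;> simp [cph, Complex.star_def, Complex.conj_I]

/-- Bitwise flip. -/
def flp {n : ℕ} (x : Fin n → Bool) : Fin n → Bool := fun i => !(x i)

lemma flp_flp {n : ℕ} (x : Fin n → Bool) : flp (flp x) = x :=
  funext fun i => Bool.not_not _

lemma flp_invol {n : ℕ} : Function.Involutive (flp (n := n)) := flp_flp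

lemma pauliW_apply {n : ℕ} (s u v : Fin n → Bool) :
    pauliW (fun _ => true) s u v =
      if v = flp u then ∏ i, cph (s i) (u i) else 0 := by
  unfold pauliW
  by_cases h : v = flp u
  · subst h
    rw [if_pos rfl]
    exact Finset.prod_congr rfl fun i _ => by rw [pauli1_true]; exact if_pos rfl
  · rw [if_neg h]
    obtain ⟨i, hi⟩ : ∃ i, v i ≠ !(u i) := by
      by_contra hc
      push_neg at hc
      exact h (funext hc)
    exact Finset.prod_eq_zero (Finset.mem_univ i) (by rw [pauli1_true, if_neg hi])

lemma pauliW_mul_apply {n : ℕ} (s : Fin n → Bool)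
    (A : Matrix (Fin n → Bool) (Fin n → Bool) ℂ) (u v : Fin n → Bool) :
    (pauliW (fun _ => true) s * A) u v
      = (∏ i, cph (s i) (u i)) * A (flp u) v := by
  rw [Matrix.mul_apply, Finset.sum_eq_single (flp u)]
  · rw [pauliW_apply, if_pos rfl]
  · intro w _ hw
    rw [pauliW_apply, if_neg hw, zero_mul]
  · intro h
    exact absurd (Finset.mem_univ _) h

lemma mul_pauliW_apply {n : ℕ} (s : Fin n → Bool)
    (A : Matrix (Fin n → Bool) (Fin n → Bool) ℂ) (u v : Fin n → Bool) :
    (A * pauliW (fun _ => true) s) u v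
      = A u (flp v) * ∏ i, cph (s i) (!(v i)) := by
  rw [Matrix.mul_apply, Finset.sum_eq_single (flp v)]
  · rw [pauliW_apply, if_pos (flp_flp v).symm]
    rfl
  · intro w _ hw
    rw [pauliW_apply, if_neg, mul_zero]
    intro hv
    exact hw (by rw [hv, flp_flp])
  · intro h
    exact absurd (Finset.mem_univ _) h

lemma conj_apply {n : ℕ} (s : Fin n → Bool)
    (A : Matrix (Fin n → Bool) (Fin n → Bool) ℂ) (y z : Fin n → Bool) :
    (pauliW (fun _ => true) s * A * pauliW (fun _ => true) s) y z
      = ((∏ i, cph (s i) (y i)) * ∏ i, cph (s i) (!(z i))) * A (flp y) (flp z) := by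
  rw [mul_pauliW_apply, pauliW_mul_apply]
  ring

lemma phase_diag {n : ℕ} (s y : Fin n → Bool) :
    (∏ i, cph (s i) (y i)) * (∏ i, cph (s i) (!(y i))) = 1 := by
  rw [← Finset.prod_mul_distrib]
  simp [cph_mul_not]

lemma pauliW_mul_self {n : ℕ} (s : Fin n → Bool) :
    pauliW (fun _ => true) s * pauliW (fun _ => true) s = 1 := by
  ext u v
  rw [pauliW_mul_apply, pauliW_apply, flp_flp]
  by_cases h : v = u
  · subst h
    rw [if_pos rfl, Matrix.one_apply_eq]
    exact phase_diag s v
  · rw [if_neg h, mul_zero, Matrix.one_apply_ne (Ne.symm h)]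

lemma pauliW_herm {n : ℕ} (s : Fin n → Bool) :
    (pauliW (fun _ => true) s)ᴴ = pauliW (fun _ => true) s := by
  ext u v
  rw [Matrix.conjTranspose_apply, pauliW_apply, pauliW_apply]
  by_cases h : v = flp u
  · have h' : u = flp v := by rw [h, flp_flp]
    rw [if_pos h', if_pos h, star_prod]
    refine Finset.prod_congr rfl fun i _ => ?_
    rw [h]
    exact star_cph (s i) (u i)
  · have h' : ¬ u = flp v := fun hc => h (by rw [hc, flp_flp])
    rw [if_neg h', if_neg h, star_zero]

lemma phase_sum_eq_zero {n : ℕ} {y z : Fin n → Bool} (h : y ≠ z) :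
    ∑ s : Fin n → Bool, ((∏ i, cph (s i) (y i)) * ∏ i, cph (s i) (!(z i))) = 0 := by
  have hrw : ∀ s : Fin n → Bool,
      (∏ i, cph (s i) (y i)) * ∏ i, cph (s i) (!(z i))
        = ∏ i, (cph (s i) (y i) * cph (s i) (!(z i))) := fun s =>
    (Finset.prod_mul_distrib).symm
  simp_rw [hrw]
  have hfac := Finset.prod_univ_sum (t := fun _ : Fin n => (Finset.univ : Finset Bool))
      (f := fun i b => cph b (y i) * cph b (!(z i)))
  rw [Fintype.piFinset_univ] at hfac
  rw [← hfac]
  obtain ⟨i, hi⟩ : ∃ i, y i ≠ z i := Function.ne_iff.mp h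
  apply Finset.prod_eq_zero (Finset.mem_univ i)
  have hz : (!(z i)) = y i := by
    cases hy' : y i <;> cases hz' : z i <;> simp_all
  rw [hz]
  cases hy' : y i <;> simp [cph, Complex.I_mul_I]

lemma conj_std {n : ℕ} (s x : Fin n → Bool) :
    pauliW (fun _ => true) s * Matrix.single x x (1 : ℂ) * pauliW (fun _ => true) s
      = Matrix.single (flp x) (flp x) (1 : ℂ) := by
  ext y z
  rw [conj_apply]
  by_cases hy : y = flp x
  · by_cases hzz : z = flp x
    · have hyz : z = y := by rw [hy, hzz]
      subst hyz
      subst hy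
      rw [flp_flp]
      simp [phase_diag]
    · have h1 : ¬ (x = flp y ∧ x = flp z) := by
        rintro ⟨-, h2⟩
        exact hzz (by rw [h2, flp_flp])
      have h2 : ¬ (flp x = y ∧ flp x = z) := by
        rintro ⟨-, h3⟩
        exact hzz h3.symm
      rw [Matrix.single_apply_of_ne (h := h1),
          Matrix.single_apply_of_ne (h := h2), mul_zero]
  · have h1 : ¬ (x = flp y ∧ x = flp z) := by
      rintro ⟨h2, -⟩
      exact hy (by rw [h2, flp_flp])
    have h2 : ¬ (flp x = y ∧ flp x = z) := by
      rintro ⟨h3, -⟩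
      exact hy h3.symm
    rw [Matrix.single_apply_of_ne (h := h1),
        Matrix.single_apply_of_ne (h := h2), mul_zero]

lemma trace_conj {n : ℕ} (s : Fin n → Bool)
    (A ρ : Matrix (Fin n → Bool) (Fin n → Bool) ℂ) :
    (A * (pauliW (fun _ => true) s * ρ * pauliW (fun _ => true) s)).trace
      = (pauliW (fun _ => true) s * A * pauliW (fun _ => true) s * ρ).trace := by
  set P := pauliW (fun _ => true) s
  rw [show A * (P * ρ * P) = (A * P * ρ) * P by noncomm_ring,
      Matrix.trace_mul_comm,
      show P * (A * P * ρ) = P * A * P * ρ by noncomm_ring]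

lemma smul_posSemidef {n : ℕ} {A : Matrix (Fin n → Bool) (Fin n → Bool) ℂ}
    (hA : A.PosSemidef) (r : ℝ) (hr : 0 ≤ r) : ((r : ℂ) • A).PosSemidef := by
  constructor
  · have h1 : star (r : ℂ) = (r : ℂ) := by simp
    rw [Matrix.IsHermitian, Matrix.conjTranspose_smul, h1, hA.1]
  · intro v
    exact (hA.smul (a := (r : ℂ)) (Complex.zero_le_real.mpr hr)).2 v

/-- XY twirling: for a measurement channel `M` of a POVM `{Pm x}` on `n` qubits, the
map `M^{XY}(ρ) = (1/2^n) Σ_{P∈{X,Y}^⊗n} P·M(PρP)·P` is the measurement channel of a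
POVM all of whose elements are diagonal in the computational basis — i.e. `M^{XY}`
is a classical measurement channel.  (Pauli words in `{X,Y}^⊗n` are `pauliW 1 s`.) -/
theorem XY_twirling_classical {n : ℕ}
    (Pm : (Fin n → Bool) → Matrix (Fin n → Bool) (Fin n → Bool) ℂ)
    (hpos : ∀ x, (Pm x).PosSemidef) (hsum : ∑ x, Pm x = 1) :
    ∃ Pm' : (Fin n → Bool) → Matrix (Fin n → Bool) (Fin n → Bool) ℂ,
      (∀ x, (Pm' x).PosSemidef) ∧ (∑ x, Pm' x = 1) ∧
      (∀ x y z, y ≠ z → Pm' x y z = 0) ∧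
      ∀ ρ, ((1 : ℂ) / 2 ^ n) •
            ∑ s, pauliW (fun _ => true) s *
              mchan Pm (pauliW (fun _ => true) s * ρ * pauliW (fun _ => true) s) *
              pauliW (fun _ => true) s
          = mchan Pm' ρ := by
  set P : (Fin n → Bool) → Matrix (Fin n → Bool) (Fin n → Bool) ℂ :=
    fun s => pauliW (fun _ => true) s with hP
  set Pm' : (Fin n → Bool) → Matrix (Fin n → Bool) (Fin n → Bool) ℂ :=
    fun x => ((1 : ℂ) / 2 ^ n) • ∑ s, P s * Pm (flp x) * P s with hPm'
  have hcast : ((1 : ℂ) / 2 ^ n) = (((1 : ℝ) / 2 ^ n : ℝ) : ℂ) := by push_cast; ring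
  have hconj_psd : ∀ x s : Fin n → Bool, (P s * Pm x * P s).PosSemidef := by
    intro x s
    have h := (hpos x).conjTranspose_mul_mul_same (P s)
    rwa [show (P s)ᴴ = P s from pauliW_herm s] at h
  refine ⟨Pm', ?_, ?_, ?_, ?_⟩
  · -- positivity
    intro x
    rw [hPm', hcast]
    refine smul_posSemidef ?_ _ (by positivity)
    exact Finset.sum_induction _ _ (fun a b ha hb => ha.add hb) Matrix.PosSemidef.zero
      (fun s _ => hconj_psd (flp x) s)
  · -- sums to one
    have hflip : ∀ s : Fin n → Bool,
        ∑ x : Fin n → Bool, P s * Pm (flp x) * P s = 1 := by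
      intro s
      rw [← Finset.sum_mul, ← Finset.mul_sum]
      have h1 : ∑ x : Fin n → Bool, Pm (flp x) = 1 := by
        rw [← hsum]
        exact Fintype.sum_bijective flp flp_invol.bijective _ _ (fun x => rfl)
      rw [h1, mul_one, pauliW_mul_self]
    calc ∑ x, Pm' x
        = ((1 : ℂ) / 2 ^ n) • ∑ x : Fin n → Bool, ∑ s, P s * Pm (flp x) * P s := by
          rw [Finset.smul_sum]
      _ = ((1 : ℂ) / 2 ^ n) • ∑ s : Fin n → Bool, ∑ x, P s * Pm (flp x) * P s := by
          rw [Finset.sum_comm]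
      _ = ((1 : ℂ) / 2 ^ n) • ∑ _s : Fin n → Bool, (1 : Matrix _ _ ℂ) :=
          congrArg _ (Finset.sum_congr rfl fun s _ => hflip s)
      _ = 1 := by
          rw [Finset.sum_const, Finset.card_univ]
          have hcard : Fintype.card (Fin n → Bool) = 2 ^ n := by simp
          rw [hcard, ← Nat.cast_smul_eq_nsmul ℂ, smul_smul]
          have h2 : ((1 : ℂ) / 2 ^ n) * ((2 ^ n : ℕ) : ℂ) = 1 := by
            push_cast
            field_simp
          rw [h2, one_smul]
  · -- off-diagonal entries vanish
    intro x y z hyz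
    rw [hPm']
    simp only [Matrix.smul_apply, Matrix.sum_apply, smul_eq_mul]
    rw [Finset.sum_congr rfl fun s _ => conj_apply s (Pm (flp x)) y z,
        ← Finset.sum_mul, phase_sum_eq_zero hyz, zero_mul, mul_zero]
  · -- channel identity
    intro ρ
    have hmid : ∀ s : Fin n → Bool,
        P s * mchan Pm (P s * ρ * P s) * P s
          = ∑ x, ((P s * Pm (flp x) * P s) * ρ).trace •
              Matrix.single x x (1 : ℂ) := by
      intro s
      unfold mchan
      rw [Finset.mul_sum, Finset.sum_mul]
      have hterm : ∀ x : Fin n → Bool,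
          P s * ((Pm x * (P s * ρ * P s)).trace • Matrix.single x x (1 : ℂ)) * P s
            = ((P s * Pm x * P s) * ρ).trace •
                Matrix.single (flp x) (flp x) (1 : ℂ) := by
        intro x
        rw [Matrix.mul_smul, Matrix.smul_mul, conj_std, _root_.trace_conj]
      rw [Finset.sum_congr rfl fun x _ => hterm x]
      refine Fintype.sum_bijective flp flp_invol.bijective _ _ (fun x => ?_)
      rw [flp_flp]
    rw [Finset.sum_congr rfl fun s _ => hmid s, Finset.sum_comm, Finset.smul_sum]
    unfold mchan
    refine Finset.sum_congr rfl fun x _ => ?_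
    rw [← Finset.sum_smul, smul_smul]
    congr 1
    rw [hPm']
    rw [Matrix.smul_mul, Matrix.trace_smul, Finset.sum_mul, Matrix.trace_sum, smul_eq_mul]
end

section
/- (Regularization by Pauli twirling) Let {Π_x^{Pauli}} be the POVM of the Pauli-twirled measurement channel M^{Pauli}. Then the diagonals of any two of its elements are related by diag(Π_y^{Pauli}) = T_y T_x^{−1} diag(Π_x^{Pauli}), where the 2^n × 2^n matrix T_x has entries (T_x)_{i,j} = (−1)^{(x⊕i)·j} (bitwise XOR and inner product mod 2). In particular every T_x is invertible. -/
open ComplexOrder Matrix Finset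

/-- Bitwise inner product. -/
def bdot {n : ℕ} (s x : Fin n → Bool) : ℕ := (Finset.univ.filter fun i => s i ∧ x i).card

/-- The transition matrix `(T_x)_{i,j} = (−1)^{(x⊕i)·j}`. -/
noncomputable def Tmat {n : ℕ} (x : Fin n → Bool) :
    Matrix (Fin n → Bool) (Fin n → Bool) ℂ :=
  fun i j => (-1 : ℂ) ^ bdot (fun k => xor (x k) (i k)) j

section auxLemmas

variable {n : ℕ}

lemma pauli1_eq_zero (ax az u v : Bool) (h : v ≠ xor u ax) : pauli1 ax az u v = 0 := by
  cases ax <;> cases az <;> cases u <;> cases v <;> simp_all [pauli1]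

lemma pauli1_mul (ax az u v : Bool) :
    pauli1 ax az u v * pauli1 ax az v u = if v = xor u ax then 1 else 0 := by
  cases ax <;> cases az <;> cases u <;> cases v <;> simp [pauli1, Complex.I_mul_I]

lemma pauliW_eq_zero (a b : Fin n → Bool) (u v : Fin n → Bool)
    (h : v ≠ fun i => xor (u i) (a i)) : pauliW a b u v = 0 := by
  rw [pauliW]
  have : ∃ i, v i ≠ xor (u i) (a i) := by
    by_contra hc; push_neg at hc; exact h (funext hc)
  obtain ⟨i, hi⟩ := this
  exact Finset.prod_eq_zero (Finset.mem_univ i) (pauli1_eq_zero _ _ _ _ hi)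

lemma pauliW_mul (a b : Fin n → Bool) (u v : Fin n → Bool) :
    pauliW a b u v * pauliW a b v u
      = if v = (fun i => xor (u i) (a i)) then 1 else 0 := by
  simp only [pauliW]
  rw [← Finset.prod_mul_distrib]
  simp_rw [pauli1_mul]
  rw [Finset.prod_boole]
  congr 1
  simp [funext_iff]

lemma fxor_cancel (j a : Fin n → Bool) :
    (fun i => xor (xor (j i) (a i)) (a i)) = j :=
  funext fun i => by simp [Bool.xor_assoc]

lemma trace_mul_single (A : Matrix (Fin n → Bool) (Fin n → Bool) ℂ)
    (m : Fin n → Bool) : (A * Matrix.single m m (1:ℂ)).trace = A m m := by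
  simp [Matrix.trace, Matrix.diag, Matrix.mul_apply, Matrix.single, ite_and]

lemma mchan_single (Pm : (Fin n → Bool) → Matrix (Fin n → Bool) (Fin n → Bool) ℂ)
    (m : Fin n → Bool) :
    mchan Pm (Matrix.single m m (1:ℂ)) = Matrix.diagonal (fun x => Pm x m m) := by
  ext u v
  simp only [mchan, Matrix.sum_apply, Matrix.smul_apply, smul_eq_mul]
  simp_rw [trace_mul_single]
  simp only [Matrix.single, Matrix.diagonal, Matrix.of_apply]
  rcases eq_or_ne u v with rfl | huv
  · simp
  · simp [huv, fun x => show ¬(x = u ∧ x = v) from fun ⟨h1,h2⟩ => huv (h1 ▸ h2 ▸ rfl)]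

lemma mchan_apply_diag (Pm : (Fin n → Bool) → Matrix (Fin n → Bool) (Fin n → Bool) ℂ)
    (ρ : Matrix (Fin n → Bool) (Fin n → Bool) ℂ) (y : Fin n → Bool) :
    mchan Pm ρ y y = (Pm y * ρ).trace := by
  simp only [mchan, Matrix.sum_apply, Matrix.smul_apply, Matrix.single, smul_eq_mul]
  rw [Finset.sum_eq_single y] <;> simp_all

lemma pauliW_conj_single (a b j : Fin n → Bool) :
    pauliW a b * Matrix.single j j (1:ℂ) * pauliW a b
      = Matrix.single (fun i => xor (j i) (a i)) (fun i => xor (j i) (a i)) 1 := by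
  ext u v
  have h1 : (pauliW a b * Matrix.single j j (1:ℂ) * pauliW a b) u v
      = pauliW a b u j * pauliW a b j v := by
    rw [Matrix.mul_apply]
    rw [Finset.sum_eq_single j]
    · simp
    · intro d _ hd
      rw [Matrix.mul_single_apply_of_ne (hbj := hd), zero_mul]
    · simp
  rw [h1]
  by_cases hu : u = fun i => xor (j i) (a i)
  · by_cases hv : v = fun i => xor (j i) (a i)
    · subst hu hv
      have := pauliW_mul a b (fun i => xor (j i) (a i)) j
      rw [fxor_cancel] at this
      simp only [if_pos rfl] at this
      simp [Matrix.single, this]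
    · rw [pauliW_eq_zero a b j v hv, mul_zero]
      rw [show Matrix.single (fun i => xor (j i) (a i)) (fun i => xor (j i) (a i)) (1:ℂ) u v
          = if (fun i => xor (j i) (a i)) = u ∧ (fun i => xor (j i) (a i)) = v then 1 else 0
        from rfl, if_neg (fun h => hv h.2.symm)]
  · have hj : j ≠ fun i => xor (u i) (a i) := by
      intro h
      exact hu (by rw [h]; exact (fxor_cancel u a).symm)
    rw [pauliW_eq_zero a b u j hj, zero_mul]
    rw [show Matrix.single (fun i => xor (j i) (a i)) (fun i => xor (j i) (a i)) (1:ℂ) u v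
        = if (fun i => xor (j i) (a i)) = u ∧ (fun i => xor (j i) (a i)) = v then 1 else 0
      from rfl, if_neg (fun h => hu h.1.symm)]

lemma pauliW_conj_diag (a b : Fin n → Bool) (d : (Fin n → Bool) → ℂ) (y : Fin n → Bool) :
    (pauliW a b * Matrix.diagonal d * pauliW a b) y y = d (fun i => xor (y i) (a i)) := by
  rw [Matrix.mul_apply]
  have key : ∀ x, (pauliW a b * Matrix.diagonal d) y x * pauliW a b x y
      = d x * (if x = (fun i => xor (y i) (a i)) then 1 else 0) := by
    intro x
    rw [Matrix.mul_diagonal,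
      show (pauliW a b y x * d x) * pauliW a b x y
        = d x * (pauliW a b y x * pauliW a b x y) by ring, pauliW_mul]
  simp_rw [key]
  simp [mul_ite, mul_one, mul_zero, Finset.sum_ite_eq']

lemma diag_formula
    (Pm PmP : (Fin n → Bool) → Matrix (Fin n → Bool) (Fin n → Bool) ℂ)
    (hP : ∀ ρ, mchan PmP ρ
        = ((1 : ℂ) / 4 ^ n) •
            ∑ a, ∑ b, pauliW a b * mchan Pm (pauliW a b * ρ * pauliW a b) * pauliW a b)
    (y j : Fin n → Bool) :
    PmP y j j = ((1 : ℂ) / 4 ^ n) * ∑ a : Fin n → Bool, (2:ℂ)^n *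
      Pm (fun i => xor (y i) (a i)) (fun i => xor (j i) (a i)) (fun i => xor (j i) (a i)) := by
  have h := congrArg (fun M : Matrix (Fin n → Bool) (Fin n → Bool) ℂ => M y y)
    (hP (Matrix.single j j 1))
  simp only [mchan_apply_diag, trace_mul_single, Matrix.smul_apply, Matrix.sum_apply,
    smul_eq_mul] at h
  have key : ∀ a b : Fin n → Bool,
      (pauliW a b * mchan Pm (pauliW a b * Matrix.single j j 1 * pauliW a b)
        * pauliW a b) y y
      = Pm (fun i => xor (y i) (a i)) (fun i => xor (j i) (a i)) (fun i => xor (j i) (a i)) := by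
    intro a b
    rw [pauliW_conj_single, mchan_single, pauliW_conj_diag]
  simp_rw [key] at h
  rw [h]
  congr 1
  refine Finset.sum_congr rfl fun a _ => ?_
  rw [Finset.sum_const]
  simp [Fintype.card_fun, nsmul_eq_mul]

lemma bdot_pow (s k : Fin n → Bool) :
    ((-1:ℂ))^(bdot s k) = ∏ i, (if s i ∧ k i then (-1:ℂ) else 1) := by
  rw [bdot, Finset.prod_ite, Finset.prod_const, Finset.prod_const, one_pow, mul_one]

lemma neg_one_bdot_mul (s t k : Fin n → Bool) :
    (-1:ℂ)^(bdot s k) * (-1:ℂ)^(bdot t k)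
      = (-1:ℂ)^(bdot (fun i => xor (s i) (t i)) k) := by
  rw [bdot_pow, bdot_pow, bdot_pow, ← Finset.prod_mul_distrib]
  refine Finset.prod_congr rfl fun i _ => ?_
  cases s i <;> cases t i <;> cases k i <;> norm_num

lemma char_sum (s : Fin n → Bool) :
    ∑ k : Fin n → Bool, ((-1:ℂ))^(bdot s k)
      = if s = (fun _ => false) then ((2:ℂ))^n else 0 := by
  split_ifs with hs
  · have hb : ∀ k : Fin n → Bool, bdot s k = 0 := fun k => by simp [hs, bdot]
    simp [hb, Fintype.card_fun]
  · obtain ⟨i₀, hi₀⟩ : ∃ i, s i = true := by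
      by_contra hc; push_neg at hc
      exact hs (funext fun i => by simpa using hc i)
    refine Finset.sum_ninvolution (fun k => Function.update k i₀ (!k i₀)) ?_ ?_ ?_ ?_
    · intro k
      rw [bdot_pow, bdot_pow,
        Finset.prod_eq_mul_prod_sdiff_singleton_of_mem (Finset.mem_univ i₀),
        Finset.prod_eq_mul_prod_sdiff_singleton_of_mem (Finset.mem_univ i₀)]
      have hrest : (∏ i ∈ Finset.univ \ {i₀},
            (if s i ∧ Function.update k i₀ (!k i₀) i then (-1:ℂ) else 1))
          = ∏ i ∈ Finset.univ \ {i₀}, (if s i ∧ k i then (-1:ℂ) else 1) := by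
        refine Finset.prod_congr rfl fun i hi => ?_
        rw [Function.update_of_ne (fun h => (Finset.mem_sdiff.mp hi).2 (Finset.mem_singleton.mpr h))]
      rw [hrest]
      simp only [Function.update_self, hi₀]
      cases k i₀ <;> simp
    · intro k _ he
      have h2 := congrFun he i₀
      simp only [Function.update_self] at h2
      exact (Bool.not_ne_self _) h2
    · intro k; exact Finset.mem_univ _
    · intro k
      simp [Function.update_idem, Function.update_self, Bool.not_not, Function.update_eq_self]

lemma two_pow_ne : ((2:ℂ))^n ≠ 0 := pow_ne_zero _ two_ne_zero

lemma Tmat_mul_transpose (x : Fin n → Bool) :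
    Tmat x * (Tmat x)ᵀ = ((2:ℂ)^n) • (1 : Matrix (Fin n → Bool) (Fin n → Bool) ℂ) := by
  ext i j
  rw [Matrix.mul_apply]
  simp_rw [Matrix.transpose_apply, Tmat, neg_one_bdot_mul]
  have h1 : (fun k => xor (xor (x k) (i k)) (xor (x k) (j k))) = fun k => xor (i k) (j k) :=
    funext fun k => by cases x k <;> cases i k <;> cases j k <;> rfl
  rw [h1, char_sum]
  have h2 : ((fun k => xor (i k) (j k)) = (fun _ => false)) ↔ i = j := by
    rw [funext_iff, funext_iff]
    refine forall_congr' fun k => ?_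
    cases i k <;> cases j k <;> simp
  rw [if_congr h2 rfl rfl, Matrix.smul_apply, Matrix.one_apply]
  split_ifs <;> simp

lemma Tmat_right_inv (x : Fin n → Bool) :
    Tmat x * (((2:ℂ)^n)⁻¹ • (Tmat x)ᵀ) = 1 := by
  rw [Matrix.mul_smul, Tmat_mul_transpose, smul_smul, inv_mul_cancel₀ two_pow_ne, one_smul]

lemma Tmat_isUnit (x : Fin n → Bool) : IsUnit (Tmat x) :=
  ⟨⟨Tmat x, ((2:ℂ)^n)⁻¹ • (Tmat x)ᵀ, Tmat_right_inv x,
    mul_eq_one_comm.mp (Tmat_right_inv x)⟩, rfl⟩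

lemma Tmat_inv_eq (x : Fin n → Bool) :
    (Tmat x)⁻¹ = ((2:ℂ)^n)⁻¹ • (Tmat x)ᵀ :=
  Matrix.inv_eq_right_inv (Tmat_right_inv x)

lemma TT_apply (x y i j : Fin n → Bool) :
    (Tmat y * (Tmat x)⁻¹) i j
      = if j = (fun k => xor (i k) (xor (y k) (x k))) then 1 else 0 := by
  rw [Tmat_inv_eq, Matrix.mul_smul, Matrix.smul_apply, Matrix.mul_apply]
  simp_rw [Matrix.transpose_apply, Tmat, neg_one_bdot_mul]
  rw [char_sum]
  have h2 : ((fun k => xor (xor (y k) (i k)) (xor (x k) (j k))) = (fun _ => false))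
      ↔ (j = fun k => xor (i k) (xor (y k) (x k))) := by
    rw [funext_iff, funext_iff]
    refine forall_congr' fun k => ?_
    cases y k <;> cases i k <;> cases x k <;> cases j k <;> simp
  rw [if_congr h2 rfl rfl]
  split_ifs
  · rw [smul_eq_mul, inv_mul_cancel₀ two_pow_ne]
  · simp

end auxLemmas

/-- Regularization by Pauli twirling: if `{PmP x}` is the POVM of the Pauli-twirled
measurement channel `M^{Pauli}`, then every `T_x` is invertible and
`diag(PmP_y) = T_y T_x⁻¹ diag(PmP_x)` for all `x, y`. -/
theorem pauli_twirl_regularizes {n : ℕ}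
    (Pm PmP : (Fin n → Bool) → Matrix (Fin n → Bool) (Fin n → Bool) ℂ)
    (hpos : ∀ x, (Pm x).PosSemidef) (hsum : ∑ x, Pm x = 1)
    (hP : ∀ ρ, mchan PmP ρ
        = ((1 : ℂ) / 4 ^ n) •
            ∑ a, ∑ b, pauliW a b * mchan Pm (pauliW a b * ρ * pauliW a b) * pauliW a b) :
    (∀ x : Fin n → Bool, IsUnit (Tmat x)) ∧
    ∀ x y : Fin n → Bool, (fun i => PmP y i i) = (Tmat y * (Tmat x)⁻¹).mulVec (fun i => PmP x i i) := by
  refine ⟨Tmat_isUnit, fun x y => ?_⟩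
  funext i
  have hmv : (Tmat y * (Tmat x)⁻¹).mulVec (fun i => PmP x i i) i
      = PmP x (fun k => xor (i k) (xor (y k) (x k))) (fun k => xor (i k) (xor (y k) (x k))) := by
    rw [Matrix.mulVec, dotProduct]
    simp_rw [TT_apply]
    simp [ite_mul, Finset.sum_ite_eq']
  rw [hmv]
  rw [diag_formula Pm PmP hP, diag_formula Pm PmP hP]
  congr 1
  refine Fintype.sum_equiv
    (Function.Involutive.toPerm (fun a k => xor (a k) (xor (y k) (x k)))
      (fun a => funext fun k => by
        show xor (xor (a k) (xor (y k) (x k))) (xor (y k) (x k)) = a k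
        cases a k <;> cases y k <;> cases x k <;> rfl)) _ _ fun a => ?_
  change _ = _ * Pm (fun k => xor (x k) (xor (a k) (xor (y k) (x k))))
    (fun k => xor (xor (i k) (xor (y k) (x k))) (xor (a k) (xor (y k) (x k))))
    (fun k => xor (xor (i k) (xor (y k) (x k))) (xor (a k) (xor (y k) (x k))))
  have hA : (fun k => xor (x k) (xor (a k) (xor (y k) (x k)))) = fun k => xor (y k) (a k) :=
    funext fun k => by cases x k <;> cases a k <;> cases y k <;> rfl
  have hB : (fun k => xor (xor (i k) (xor (y k) (x k))) (xor (a k) (xor (y k) (x k))))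
      = fun k => xor (i k) (a k) :=
    funext fun k => by cases i k <;> cases a k <;> cases y k <;> cases x k <;> rfl
  rw [hA, hB]
end
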